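/- Let X be a finite set, k a field, and σ, τ : X → X maps with σ(τ(x)) = τ(σ(x)) = x for all x ∈ X. Let ř = Σ_{x,y∈X} e_{x,σ(y)} ⊗ e_{y,τ(x)} (Lyubashenko's solution) as a matrix on the tensor square. Then for all x, y ∈ X the matrix ř commutes with both twisted coproducts: ř·(e_{σ(x),σ(y)} ⊗ 1 + 1 ⊗ e_{x,y}) = (e_{σ(x),σ(y)} ⊗ 1 + 1 ⊗ e_{x,y})·ř and ř·(e_{x,y} ⊗ 1 + 1 ⊗ e_{τ(x),τ(y)}) = (e_{x,y} ⊗ 1 + 1 ⊗ e_{τ(x),τ(y)})·ř. -/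

import Mathlib

open Kronecker

section Aux

variable {k : Type*} [Field k] {X : Type*} [Fintype X] [DecidableEq X]

local notation "E" => Matrix.single

private lemma aux_mul1 (σ τ : X → X) (hστ : ∀ x, σ (τ x) = x) (hτσ : ∀ x, τ (σ x) = x)
    (a b : X) :
    (∑ x : X, ∑ y : X, (E x (σ y) 1) ⊗ₖ (E y (τ x) (1 : k))) *
      ((E a b 1) ⊗ₖ (1 : Matrix X X k)) =
    ∑ u : X, (E u b 1) ⊗ₖ (E (τ a) (τ u) (1 : k)) := by
  rw [Finset.sum_mul]
  refine Finset.sum_congr rfl fun u _ => ?_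
  rw [Finset.sum_mul, Finset.sum_eq_single (τ a)]
  · rw [← Matrix.mul_kronecker_mul, Matrix.mul_one, hστ,
      Matrix.single_mul_single_same, one_mul]
  · intro v _ hv
    rw [← Matrix.mul_kronecker_mul, Matrix.single_mul_single_of_ne, Matrix.zero_kronecker]
    intro h
    exact hv (by rw [← hτσ v, h])
  · intro h; exact absurd (Finset.mem_univ _) h

private lemma aux_mul2 (σ τ : X → X) (hστ : ∀ x, σ (τ x) = x) (hτσ : ∀ x, τ (σ x) = x)
    (a b : X) :
    (∑ x : X, ∑ y : X, (E x (σ y) 1) ⊗ₖ (E y (τ x) (1 : k))) *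
      ((1 : Matrix X X k) ⊗ₖ (E (τ a) (τ b) 1)) =
    ∑ v : X, (E a (σ v) 1) ⊗ₖ (E v (τ b) (1 : k)) := by
  rw [Finset.sum_mul, Finset.sum_eq_single a]
  · rw [Finset.sum_mul]
    refine Finset.sum_congr rfl fun v _ => ?_
    rw [← Matrix.mul_kronecker_mul, Matrix.mul_one,
      Matrix.single_mul_single_same, one_mul]
  · intro u _ hu
    rw [Finset.sum_mul]
    refine Finset.sum_eq_zero fun v _ => ?_
    rw [← Matrix.mul_kronecker_mul, Matrix.single_mul_single_of_ne, Matrix.kronecker_zero]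
    intro h
    exact hu (by rw [← hστ u, h, hστ])
  · intro h; exact absurd (Finset.mem_univ _) h

private lemma aux_mul3 (σ τ : X → X) (hστ : ∀ x, σ (τ x) = x) (hτσ : ∀ x, τ (σ x) = x)
    (a b : X) :
    ((E a b 1) ⊗ₖ (1 : Matrix X X k)) *
      (∑ x : X, ∑ y : X, (E x (σ y) 1) ⊗ₖ (E y (τ x) (1 : k))) =
    ∑ v : X, (E a (σ v) 1) ⊗ₖ (E v (τ b) (1 : k)) := by
  rw [Finset.mul_sum, Finset.sum_eq_single b]
  · rw [Finset.mul_sum]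
    refine Finset.sum_congr rfl fun v _ => ?_
    rw [← Matrix.mul_kronecker_mul, Matrix.one_mul,
      Matrix.single_mul_single_same, one_mul]
  · intro u _ hu
    rw [Finset.mul_sum]
    refine Finset.sum_eq_zero fun v _ => ?_
    rw [← Matrix.mul_kronecker_mul, Matrix.one_mul,
      Matrix.single_mul_single_of_ne (h := Ne.symm hu), Matrix.zero_kronecker]
  · intro h; exact absurd (Finset.mem_univ _) h

private lemma aux_mul4 (σ τ : X → X) (hστ : ∀ x, σ (τ x) = x) (hτσ : ∀ x, τ (σ x) = x)
    (a b : X) :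
    ((1 : Matrix X X k) ⊗ₖ (E (τ a) (τ b) 1)) *
      (∑ x : X, ∑ y : X, (E x (σ y) 1) ⊗ₖ (E y (τ x) (1 : k))) =
    ∑ u : X, (E u b 1) ⊗ₖ (E (τ a) (τ u) (1 : k)) := by
  rw [Finset.mul_sum]
  refine Finset.sum_congr rfl fun u _ => ?_
  rw [Finset.mul_sum, Finset.sum_eq_single (τ b)]
  · rw [← Matrix.mul_kronecker_mul, Matrix.one_mul, hστ,
      Matrix.single_mul_single_same, one_mul]
  · intro v _ hv
    rw [← Matrix.mul_kronecker_mul, Matrix.one_mul,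
      Matrix.single_mul_single_of_ne (h := Ne.symm hv), Matrix.kronecker_zero]
  · intro h; exact absurd (Finset.mem_univ _) h

private lemma aux_key (σ τ : X → X) (hστ : ∀ x, σ (τ x) = x) (hτσ : ∀ x, τ (σ x) = x)
    (a b : X) :
    (∑ x : X, ∑ y : X, (E x (σ y) 1) ⊗ₖ (E y (τ x) (1 : k))) *
      ((E a b 1) ⊗ₖ (1 : Matrix X X k) + (1 : Matrix X X k) ⊗ₖ (E (τ a) (τ b) 1)) =
    ((E a b 1) ⊗ₖ (1 : Matrix X X k) + (1 : Matrix X X k) ⊗ₖ (E (τ a) (τ b) 1)) *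
      (∑ x : X, ∑ y : X, (E x (σ y) 1) ⊗ₖ (E y (τ x) (1 : k))) := by
  rw [Matrix.mul_add, Matrix.add_mul,
    aux_mul1 σ τ hστ hτσ a b, aux_mul2 σ τ hστ hτσ a b,
    aux_mul3 σ τ hστ hτσ a b, aux_mul4 σ τ hστ hτσ a b, add_comm]

end Aux

/-- Lyubashenko's solution `rb = Σ_{x,y} e_{x,σ(y)} ⊗ e_{y,τ(x)}`
commutes with the twisted coproducts
`Δ₁(e_{x,y}) = e_{σ(x),σ(y)} ⊗ 1 + 1 ⊗ e_{x,y}` and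
`Δ₂(e_{x,y}) = e_{x,y} ⊗ 1 + 1 ⊗ e_{τ(x),τ(y)}`. -/
theorem stmt_9 {k : Type*} [Field k] {X : Type*} [Fintype X] [DecidableEq X]
    (σ τ : X → X) (hστ : ∀ x, σ (τ x) = x) (hτσ : ∀ x, τ (σ x) = x)
    (rb : Matrix (X × X) (X × X) k)
    (hrb : rb = ∑ x : X, ∑ y : X,
      (Matrix.single x (σ y) 1) ⊗ₖ (Matrix.single y (τ x) (1 : k))) :
    ∀ x y : X,
      (rb * ((Matrix.single (σ x) (σ y) 1) ⊗ₖ (1 : Matrix X X k) +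
          (1 : Matrix X X k) ⊗ₖ (Matrix.single x y 1)) =
        ((Matrix.single (σ x) (σ y) 1) ⊗ₖ (1 : Matrix X X k) +
          (1 : Matrix X X k) ⊗ₖ (Matrix.single x y 1)) * rb) ∧
      (rb * ((Matrix.single x y 1) ⊗ₖ (1 : Matrix X X k) +
          (1 : Matrix X X k) ⊗ₖ (Matrix.single (τ x) (τ y) 1)) =
        ((Matrix.single x y 1) ⊗ₖ (1 : Matrix X X k) +
          (1 : Matrix X X k) ⊗ₖ (Matrix.single (τ x) (τ y) 1)) * rb) := by
  subst hrb
  intro x y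
  constructor
  · have h := aux_key (k := k) σ τ hστ hτσ (σ x) (σ y)
    rwa [hτσ, hτσ] at h
  · exact aux_key (k := k) σ τ hστ hτσ x y
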